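/- Let θ: ℕ → ℕ satisfy θ(k) ≥ 1 and 2·θ(k)² ≤ θ(2k) ≤ 21·θ(k)² for all k ≥ 1. Fix m ≥ 1 and let L_m be the limit of the sequence b_t = θ(m·2^t)^{1/(m·2^t)}. Then for every t ≥ 0, (2·θ(m·2^t))^{1/(m·2^t)} ≤ L_m ≤ (21·θ(m·2^t))^{1/(m·2^t)}. -/

import Mathlib

theorem limit_bounds (θ : ℕ → ℕ)
    (hpos : ∀ k, 1 ≤ k → 1 ≤ θ k)
    (hlo : ∀ k, 1 ≤ k → 2 * θ k ^ 2 ≤ θ (2 * k))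
    (hhi : ∀ k, 1 ≤ k → θ (2 * k) ≤ 21 * θ k ^ 2)
    (m : ℕ) (hm : 1 ≤ m) (L : ℝ)
    (hL : Filter.Tendsto
      (fun t : ℕ => (θ (m * 2 ^ t) : ℝ) ^ (1 / (m * 2 ^ t : ℝ)))
      Filter.atTop (nhds L)) :
    ∀ t : ℕ,
      (2 * θ (m * 2 ^ t) : ℝ) ^ (1 / (m * 2 ^ t : ℝ)) ≤ L ∧
      L ≤ (21 * θ (m * 2 ^ t) : ℝ) ^ (1 / (m * 2 ^ t : ℝ)) := by
  intro t
  have hn : ∀ s : ℕ, 1 ≤ m * 2 ^ s := fun s => Nat.mul_pos hm ((by positivity))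
  have hθ : ∀ s : ℕ, 1 ≤ θ (m * 2 ^ s) := fun s => hpos _ (hn s)
  have hdouble : ∀ s : ℕ, 2 * (m * 2 ^ s) = m * 2 ^ (s + 1) := fun s => by ring
  -- nat inequalities
  have hlow : ∀ j : ℕ, (2 * θ (m * 2 ^ t)) ^ 2 ^ j ≤ 2 * θ (m * 2 ^ (t + j)) := by
    intro j
    induction j with
    | zero => simp
    | succ j ih =>
      have h1 := hlo (m * 2 ^ (t + j)) (hn _)
      calc (2 * θ (m * 2 ^ t)) ^ 2 ^ (j + 1)
          = ((2 * θ (m * 2 ^ t)) ^ 2 ^ j) ^ 2 := by rw [← pow_mul, pow_succ]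
        _ ≤ (2 * θ (m * 2 ^ (t + j))) ^ 2 := Nat.pow_le_pow_left ih 2
        _ = 2 * (2 * θ (m * 2 ^ (t + j)) ^ 2) := by ring
        _ ≤ 2 * θ (2 * (m * 2 ^ (t + j))) := Nat.mul_le_mul_left 2 h1
        _ = 2 * θ (m * 2 ^ (t + (j + 1))) := by rw [hdouble, ← add_assoc]
  have hhigh : ∀ j : ℕ, 21 * θ (m * 2 ^ (t + j)) ≤ (21 * θ (m * 2 ^ t)) ^ 2 ^ j := by
    intro j
    induction j with
    | zero => simp
    | succ j ih =>
      have h1 := hhi (m * 2 ^ (t + j)) (hn _)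
      calc 21 * θ (m * 2 ^ (t + (j + 1)))
          = 21 * θ (2 * (m * 2 ^ (t + j))) := by rw [hdouble, ← add_assoc]
        _ ≤ 21 * (21 * θ (m * 2 ^ (t + j)) ^ 2) := Nat.mul_le_mul_left 21 h1
        _ ≤ (21 * θ (m * 2 ^ (t + j))) ^ 2 := by ring_nf; nlinarith [hθ (t + j)]
        _ ≤ ((21 * θ (m * 2 ^ t)) ^ 2 ^ j) ^ 2 := Nat.pow_le_pow_left ih 2
        _ = (21 * θ (m * 2 ^ t)) ^ 2 ^ (j + 1) := by rw [← pow_mul, pow_succ]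
  -- real setup
  have hmpos : (0:ℝ) < (m:ℝ) := by exact_mod_cast hm
  have hns : ∀ s : ℕ, (0:ℝ) < (m:ℝ) * 2 ^ s := fun s => by positivity
  have hexp : ∀ j : ℕ, (2 ^ j : ℝ) * (1 / ((m:ℝ) * 2 ^ (t + j))) = 1 / ((m:ℝ) * 2 ^ t) := by
    intro j
    have h2 : (2:ℝ) ^ (t + j) = 2 ^ t * 2 ^ j := by rw [pow_add]
    field_simp [h2]
    ring
  set c : ℝ := 2 * (θ (m * 2 ^ t) : ℝ) with hc
  set d : ℝ := 21 * (θ (m * 2 ^ t) : ℝ) with hd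
  have hθr : (1:ℝ) ≤ (θ (m * 2 ^ t) : ℝ) := by exact_mod_cast hθ t
  have hc1 : (1:ℝ) ≤ c := by simp only [hc]; linarith
  have hd1 : (1:ℝ) ≤ d := by simp only [hd]; linarith
  have hc0 : (0:ℝ) ≤ c := by linarith
  have hd0 : (0:ℝ) ≤ d := by linarith
  constructor
  · -- lower bound: c^(1/n_t) ≤ L
    -- b_{t+j} ≥ c^(1/n_t) / 2^(1/n_{t+j})
    have key : ∀ s : ℕ, t ≤ s →
        c ^ (1 / ((m:ℝ) * 2 ^ t)) / 2 ^ (1 / ((m:ℝ) * 2 ^ s)) ≤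
        (θ (m * 2 ^ s) : ℝ) ^ (1 / ((m:ℝ) * 2 ^ s)) := by
      intro s hs
      obtain ⟨j, rfl⟩ := Nat.exists_eq_add_of_le hs
      have hlj := hlow j
      have hlj' : c ^ (2 ^ j : ℕ) ≤ 2 * (θ (m * 2 ^ (t + j)) : ℝ) := by
        rw [hc]
        push_cast
        exact_mod_cast hlj
      have hinv : (0:ℝ) ≤ 1 / ((m:ℝ) * 2 ^ (t + j)) := by positivity
      have h1 : (c ^ (2 ^ j : ℕ) / 2 : ℝ) ≤ (θ (m * 2 ^ (t + j)) : ℝ) := by linarith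
      have h2 : ((c ^ (2 ^ j : ℕ) / 2 : ℝ)) ^ (1 / ((m:ℝ) * 2 ^ (t + j))) ≤
          (θ (m * 2 ^ (t + j)) : ℝ) ^ (1 / ((m:ℝ) * 2 ^ (t + j))) := by
        apply Real.rpow_le_rpow (by positivity) h1 hinv
      calc c ^ (1 / ((m:ℝ) * 2 ^ t)) / 2 ^ (1 / ((m:ℝ) * 2 ^ (t + j)))
          = (c ^ (2 ^ j : ℕ) / 2 : ℝ) ^ (1 / ((m:ℝ) * 2 ^ (t + j))) := by
            rw [Real.div_rpow (by positivity) (by norm_num),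
              ← Real.rpow_natCast c (2 ^ j), ← Real.rpow_mul hc0]
            push_cast
            rw [hexp j]
        _ ≤ _ := h2
    -- limit of lhs
    have hdenom : Filter.Tendsto (fun s : ℕ => 1 / ((m:ℝ) * 2 ^ s)) Filter.atTop (nhds 0) := by
      have h1 : Filter.Tendsto (fun s : ℕ => ((m:ℝ) * 2 ^ s)) Filter.atTop Filter.atTop := by
        exact Filter.Tendsto.const_mul_atTop hmpos
          (tendsto_pow_atTop_atTop_of_one_lt one_lt_two)
      simpa only [one_div, Pi.inv_def] using h1.inv_tendsto_atTop
    have h2t : Filter.Tendsto (fun s : ℕ => (2:ℝ) ^ (1 / ((m:ℝ) * 2 ^ s)))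
        Filter.atTop (nhds 1) := by
      have := (Real.continuousAt_const_rpow (a := (2:ℝ)) (b := 0) (by norm_num)).tendsto.comp hdenom
      simpa [Function.comp_def] using this
    have hlhs : Filter.Tendsto
        (fun s : ℕ => c ^ (1 / ((m:ℝ) * 2 ^ t)) / 2 ^ (1 / ((m:ℝ) * 2 ^ s)))
        Filter.atTop (nhds (c ^ (1 / ((m:ℝ) * 2 ^ t)))) := by
      have := Filter.Tendsto.div (tendsto_const_nhds (x := c ^ (1 / ((m:ℝ) * 2 ^ t))) (f := Filter.atTop (α := ℕ))) h2t one_ne_zero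
      simpa [Pi.div_def] using this
    have : c ^ (1 / ((m:ℝ) * 2 ^ t)) ≤ L := by
      apply le_of_tendsto_of_tendsto hlhs hL
      filter_upwards [Filter.eventually_ge_atTop t] with s hs
      exact key s hs
    convert this using 2 <;> push_cast <;> ring
  · -- upper bound
    have key : ∀ s : ℕ, t ≤ s →
        (θ (m * 2 ^ s) : ℝ) ^ (1 / ((m:ℝ) * 2 ^ s)) ≤ d ^ (1 / ((m:ℝ) * 2 ^ t)) := by
      intro s hs
      obtain ⟨j, rfl⟩ := Nat.exists_eq_add_of_le hs
      have hhj := hhigh j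
      have hhj' : (θ (m * 2 ^ (t + j)) : ℝ) ≤ d ^ (2 ^ j : ℕ) := by
        have h0 : (θ (m * 2 ^ (t + j)) : ℕ) ≤ (21 * θ (m * 2 ^ t)) ^ 2 ^ j :=
          le_trans (Nat.le_mul_of_pos_left _ (by norm_num)) hhj
        rw [hd]
        push_cast
        exact_mod_cast h0
      have hinv : (0:ℝ) ≤ 1 / ((m:ℝ) * 2 ^ (t + j)) := by positivity
      calc (θ (m * 2 ^ (t + j)) : ℝ) ^ (1 / ((m:ℝ) * 2 ^ (t + j)))
          ≤ (d ^ (2 ^ j : ℕ)) ^ (1 / ((m:ℝ) * 2 ^ (t + j))) :=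
            Real.rpow_le_rpow (by positivity) hhj' hinv
        _ = d ^ (1 / ((m:ℝ) * 2 ^ t)) := by
            rw [← Real.rpow_natCast d (2 ^ j), ← Real.rpow_mul hd0]
            push_cast
            rw [hexp j]
    have : L ≤ d ^ (1 / ((m:ℝ) * 2 ^ t)) := by
      apply le_of_tendsto hL
      filter_upwards [Filter.eventually_ge_atTop t] with s hs
      exact key s hs
    convert this using 2 <;> push_cast <;> ring
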